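/- For positive masses z sorted ascending with z_0 < z_1 (smallest and second-smallest distinct nonzero masses), one gradient descent step of entropy minimization strictly increases the ratio z_1/z_0: (z_1 − η·g_1)/(z_0 − η·g_0) > z_1/z_0, where g_k = ∑_j z_j log(z_j/z_k), provided both numerator and denominator remain positive. -/

import Mathlib

/-- For positive masses z sorted ascending with the smallest and
second-smallest distinct, one entropy gradient descent step strictly increases the
ratio of the second-smallest to the smallest mass, where g_k = ∑_j z_j log(z_j/z_k). -/
theorem ratio_increases (s : ℕ) (hs : 2 ≤ s) (z : Fin s → ℝ)
    (hz : ∀ i, 0 < z i) (hmono : Monotone z)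
    (h01 : z ⟨0, by omega⟩ < z ⟨1, by omega⟩) (η : ℝ) (hη : 0 < η)
    (hd0 : 0 < z ⟨0, by omega⟩ - η * ∑ j, z j * Real.log (z j / z ⟨0, by omega⟩))
    (hd1 : 0 < z ⟨1, by omega⟩ - η * ∑ j, z j * Real.log (z j / z ⟨1, by omega⟩)) :
    z ⟨1, by omega⟩ / z ⟨0, by omega⟩ <
      (z ⟨1, by omega⟩ - η * ∑ j, z j * Real.log (z j / z ⟨1, by omega⟩)) /
      (z ⟨0, by omega⟩ - η * ∑ j, z j * Real.log (z j / z ⟨0, by omega⟩)) := by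
  set i0 : Fin s := ⟨0, by omega⟩
  set i1 : Fin s := ⟨1, by omega⟩
  set g0 : ℝ := ∑ j, z j * Real.log (z j / z i0) with hg0
  set g1 : ℝ := ∑ j, z j * Real.log (z j / z i1) with hg1
  have hz0 : 0 < z i0 := hz i0
  have hz1 : 0 < z i1 := hz i1
  have hle : ∀ j, z i0 ≤ z j := fun j => hmono (by
    simp only [Fin.le_def]; exact Nat.zero_le _)
  -- g1 < g0 termwise
  have hglt : g1 < g0 := by
    apply Finset.sum_lt_sum_of_nonempty
    · exact ⟨i0, Finset.mem_univ i0⟩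
    · intro j _
      have hzj := hz j
      apply mul_lt_mul_of_pos_left _ hzj
      apply Real.log_lt_log (by positivity)
      exact div_lt_div_of_pos_left hzj hz0 h01
  -- g0 > 0, since the j = i1 term is positive and others nonneg
  have hg0pos : 0 < g0 := by
    have h1 : 0 < z i1 * Real.log (z i1 / z i0) := by
      apply mul_pos hz1
      apply Real.log_pos
      rw [lt_div_iff₀ hz0]; linarith
    have := Finset.single_le_sum (f := fun j => z j * Real.log (z j / z i0))
      (fun j _ => by
        have hzj := hz j
        apply mul_nonneg hzj.le
        apply Real.log_nonneg
        rw [le_div_iff₀ hz0]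
        have := hle j; linarith) (Finset.mem_univ i1)
    linarith
  -- key: z0 * g1 < z1 * g0
  have hkey : z i0 * g1 < z i1 * g0 := by
    rcases le_or_gt 0 g1 with h | h
    · calc z i0 * g1 ≤ z i1 * g1 := by nlinarith
        _ < z i1 * g0 := by nlinarith
    · nlinarith
  rw [div_lt_div_iff₀ hz0 hd0]
  nlinarith
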